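/- For all real numbers θ > 0, ρ > 0 and γ ≥ 0, one has ∫₀¹ θ · e^{γx} · (1-x)^{ρ} dx = (θ/(1+ρ)) · (1 + Σ_{m=1}^∞ γ^m / (2+ρ)_m). (This is the expected average number of pairwise gene-content differences, E[D^{(n)}], from Corollary 2.) -/

import Mathlib

open scoped BigOperators

open intervalIntegral

/-- The real Pochhammer symbol `(a)_m = a (a+1) ⋯ (a+m-1)`. -/
noncomputable def pochR (a : ℝ) (m : ℕ) : ℝ := (ascPochhammer ℝ m).eval a

lemma pochR_succ_left (a : ℝ) (m : ℕ) : pochR a (m+1) = a * pochR (a+1) m := by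
  simp [pochR, ascPochhammer_succ_left, Polynomial.eval_comp]
lemma pochR_succ_right (a : ℝ) (m : ℕ) : pochR a (m+1) = pochR a m * (a + m) := by
  simp [pochR, ascPochhammer_succ_right]
lemma pochR_pos {a : ℝ} (ha : 0 < a) (m : ℕ) : 0 < pochR a m := by
  induction m with
  | zero => simp [pochR]
  | succ n ih => rw [pochR_succ_right]; positivity

lemma contOn_rpow (p : ℝ) (hp : 0 ≤ p) (s : Set ℝ) :
    ContinuousOn (fun x : ℝ => (1 - x) ^ p) s :=
  ((continuous_const.sub continuous_id).continuousOn).rpow_const fun x _ => Or.inr hp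

lemma hasDeriv_anti (p : ℝ) (hp : 0 < p) (x : ℝ) :
    HasDerivAt (fun y : ℝ => -((1 - y) ^ (p+1)) / (p+1)) ((1 - x) ^ p) x := by
  have h1 : HasDerivAt (fun y : ℝ => 1 - y) (-1) x := (hasDerivAt_id x).const_sub 1
  have h2 := (h1.rpow_const (p := p+1) (Or.inr (by linarith))).div_const (p+1)
  have h3 := h2.neg
  have e1 : (fun y : ℝ => -((1 - y) ^ (p+1)) / (p+1)) = fun y : ℝ => -((1 - y) ^ (p+1) / (p+1)) := by
    funext y; ring
  rw [e1]
  refine h3.congr_deriv ?_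
  rw [show p + 1 - 1 = p by ring]
  have hne : p + 1 ≠ 0 := by linarith
  field_simp

lemma beta_nat_rpow : ∀ (m : ℕ) (p : ℝ), 0 < p →
    ∫ x in (0:ℝ)..1, x ^ m * (1 - x) ^ p = m.factorial / pochR (p + 1) (m + 1) := by
  intro m
  induction m with
  | zero =>
      intro p hp
      have hderiv : ∀ x ∈ Set.uIcc (0:ℝ) 1,
          HasDerivAt (fun y : ℝ => -((1 - y) ^ (p+1)) / (p+1)) (x ^ 0 * (1 - x) ^ p) x := by
        intro x _
        simpa using hasDeriv_anti p hp x
      have hint : IntervalIntegrable (fun x : ℝ => x ^ 0 * (1 - x) ^ p) MeasureTheory.volume 0 1 := by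
        apply ContinuousOn.intervalIntegrable
        exact (continuousOn_pow 0).mul (contOn_rpow p hp.le _)
      rw [integral_eq_sub_of_hasDerivAt hderiv hint]
      have h0 : ((1:ℝ) - 1) ^ (p+1) = 0 := by
        rw [sub_self, Real.zero_rpow (by linarith)]
      have h1 : ((1:ℝ) - 0) ^ (p+1) = 1 := by
        rw [sub_zero, Real.one_rpow]
      rw [h0, h1]
      have : pochR (p+1) 1 = p + 1 := by
        rw [pochR_succ_right]; simp [pochR]
      rw [this]
      simp
      field_simp
  | succ m ih =>
      intro p hp
      have hp1 : (0:ℝ) < p + 1 := by linarith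
      have hderiv : ∀ x ∈ Set.uIcc (0:ℝ) 1,
          HasDerivAt (fun y : ℝ => y ^ (m+1) * (-((1 - y) ^ (p+1)) / (p+1)))
            (x ^ (m+1) * (1 - x) ^ p
              - ((m+1 : ℝ)/(p+1)) * (x ^ m * (1 - x) ^ (p+1))) x := by
        intro x _
        have hpow : HasDerivAt (fun y : ℝ => y ^ (m+1)) ((m+1 : ℝ) * x ^ m) x := by
          simpa using hasDerivAt_pow (m+1) x
        have := hpow.mul (hasDeriv_anti p hp x)
        refine this.congr_deriv ?_
        field_simp
        ring
      have hi1 : IntervalIntegrable (fun x : ℝ => x ^ (m+1) * (1 - x) ^ p)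
          MeasureTheory.volume 0 1 :=
        ContinuousOn.intervalIntegrable ((continuousOn_pow (m+1)).mul (contOn_rpow p hp.le _))
      have hi2 : IntervalIntegrable (fun x : ℝ => x ^ m * (1 - x) ^ (p+1))
          MeasureTheory.volume 0 1 :=
        ContinuousOn.intervalIntegrable ((continuousOn_pow m).mul (contOn_rpow (p+1) hp1.le _))
      have hint : IntervalIntegrable (fun x : ℝ => x ^ (m+1) * (1 - x) ^ p
          - ((m+1 : ℝ)/(p+1)) * (x ^ m * (1 - x) ^ (p+1))) MeasureTheory.volume 0 1 :=
        hi1.sub (hi2.const_mul _)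
      have hIBP := integral_eq_sub_of_hasDerivAt hderiv hint
      rw [intervalIntegral.integral_sub hi1 (hi2.const_mul _),
        intervalIntegral.integral_const_mul] at hIBP
      have hval : ((1:ℝ) ^ (m+1) * (-((1 - 1) ^ (p+1)) / (p+1)))
          - ((0:ℝ) ^ (m+1) * (-((1 - 0) ^ (p+1)) / (p+1))) = 0 := by
        rw [sub_self, Real.zero_rpow (by linarith : p + 1 ≠ 0)]
        simp
      rw [hval, sub_eq_zero] at hIBP
      rw [hIBP, ih (p+1) hp1]
      have hposh : 0 < pochR (p+2) (m+1) := pochR_pos (by linarith) _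
      have hr : pochR (p+1) (m+1+1) = (p+1) * pochR (p+2) (m+1) := by
        rw [pochR_succ_left, show p + 1 + 1 = p + 2 by ring]
      rw [show p + 1 + 1 = p + 2 by ring, hr]
      field_simp
      push_cast [Nat.factorial_succ]
      ring

lemma pochR_zero (a : ℝ) : pochR a 0 = 1 := by simp [pochR]

lemma factorial_le_pochR {a : ℝ} (ha : 1 ≤ a) (m : ℕ) : (m.factorial : ℝ) ≤ pochR a m := by
  induction m with
  | zero => simp [pochR_zero]
  | succ n ih =>
      rw [pochR_succ_right]
      have h1 : (n.factorial : ℝ) * (1 + n) ≤ pochR a n * (a + n) :=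
        mul_le_mul ih (by linarith) (by positivity) (le_of_lt (pochR_pos (by linarith) n))
      calc ((n+1).factorial : ℝ) = (n.factorial : ℝ) * (1 + n) := by
            push_cast [Nat.factorial_succ]; ring
        _ ≤ _ := h1

open MeasureTheory

/-- Corollary 2, `E[D^{(n)}]`: for `θ > 0`, `ρ > 0`, `γ ≥ 0`,
`∫₀¹ θ e^{γx} (1-x)^{ρ} dx = (θ/(1+ρ)) (1 + Σ_{m≥1} γ^m/(2+ρ)_m)`. -/
theorem expected_pairwise_differences (θ ρ γ : ℝ) (hθ : 0 < θ) (hρ : 0 < ρ) (hγ : 0 ≤ γ) :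
    ∫ x in Set.Ioo (0 : ℝ) 1, θ * Real.exp (γ * x) * (1 - x) ^ ρ =
      θ / (1 + ρ) * (1 + ∑' m : ℕ, γ ^ (m + 1) / pochR (2 + ρ) (m + 1)) := by
  set f : ℕ → ℝ → ℝ := fun m x => θ * (γ ^ m / m.factorial) * (x ^ m * (1 - x) ^ ρ) with hf
  have hcongr : ∀ x : ℝ, θ * Real.exp (γ * x) * (1 - x) ^ ρ = ∑' m : ℕ, f m x := by
    intro x
    have hexp : Real.exp (γ * x) = ∑' n : ℕ, (γ * x) ^ n / n.factorial := by
      rw [Real.exp_eq_exp_ℝ, NormedSpace.exp_eq_tsum_div]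
    have h2 : ∑' m : ℕ, f m x = ∑' m : ℕ, (θ * (1 - x) ^ ρ) * ((γ * x) ^ m / m.factorial) := by
      refine tsum_congr fun m => ?_
      simp only [hf, mul_pow]
      ring
    rw [h2, tsum_mul_left, ← hexp]
    ring
  rw [MeasureTheory.setIntegral_congr_fun measurableSet_Ioo fun x _ => hcongr x]
  have hmeas : ∀ m : ℕ, AEStronglyMeasurable (f m) (volume.restrict (Set.Ioo (0:ℝ) 1)) := by
    intro m
    apply Continuous.aestronglyMeasurable
    have hc : Continuous fun x : ℝ => (1 - x) ^ ρ := by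
      rw [continuous_iff_continuousAt]
      intro x
      exact (Real.continuousAt_rpow_const _ _ (Or.inr hρ.le)).comp
        ((continuous_const.sub continuous_id).continuousAt)
    exact continuous_const.mul ((continuous_pow m).mul hc)
  have hbound : ∀ m : ℕ, (∫⁻ x in Set.Ioo (0:ℝ) 1, ‖f m x‖₊)
      ≤ ENNReal.ofReal (θ * (γ ^ m / m.factorial)) := by
    intro m
    have hb : ∀ x ∈ Set.Ioo (0:ℝ) 1,
        (‖f m x‖₊ : ENNReal) ≤ ENNReal.ofReal (θ * (γ ^ m / m.factorial)) := by
      intro x hx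
      rw [← ENNReal.ofReal_coe_nnreal, coe_nnnorm]
      apply ENNReal.ofReal_le_ofReal
      have hx0 : 0 ≤ x := hx.1.le
      have hx1 : x ≤ 1 := hx.2.le
      have h1x : 0 ≤ 1 - x := by linarith
      have hfac : (0:ℝ) < m.factorial := by positivity
      have hfx : f m x = θ * (γ ^ m / m.factorial) * (x ^ m * (1 - x) ^ ρ) := rfl
      rw [hfx, Real.norm_eq_abs, abs_of_nonneg (by positivity)]
      have hxm : x ^ m ≤ 1 := pow_le_one₀ hx0 hx1
      have hrx : (1 - x) ^ ρ ≤ 1 := Real.rpow_le_one h1x (by linarith) hρ.le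
      have hle1 : x ^ m * (1 - x) ^ ρ ≤ 1 := by
        calc x ^ m * (1 - x) ^ ρ ≤ 1 * 1 :=
              mul_le_mul hxm hrx (by positivity) zero_le_one
          _ = 1 := by ring
      have hnn : (0:ℝ) ≤ θ * (γ ^ m / m.factorial) := by positivity
      nlinarith
    calc (∫⁻ x in Set.Ioo (0:ℝ) 1, ‖f m x‖₊)
        ≤ ∫⁻ _ in Set.Ioo (0:ℝ) 1, ENNReal.ofReal (θ * (γ ^ m / m.factorial)) :=
          setLIntegral_mono measurable_const hb
      _ = ENNReal.ofReal (θ * (γ ^ m / m.factorial)) * volume (Set.Ioo (0:ℝ) 1) :=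
          setLIntegral_const _ _
      _ = ENNReal.ofReal (θ * (γ ^ m / m.factorial)) := by
          simp [Real.volume_Ioo]
  have hsummab : Summable fun m : ℕ => θ * (γ ^ m / m.factorial) :=
    (Real.summable_pow_div_factorial γ).mul_left θ
  have hne : (∑' m : ℕ, ∫⁻ x in Set.Ioo (0:ℝ) 1, ‖f m x‖₊) ≠ ⊤ := by
    have hle : (∑' m : ℕ, ∫⁻ x in Set.Ioo (0:ℝ) 1, ‖f m x‖₊)
        ≤ ENNReal.ofReal (∑' m : ℕ, θ * (γ ^ m / m.factorial)) := by
      rw [ENNReal.ofReal_tsum_of_nonneg (fun m => by positivity) hsummab]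
      exact ENNReal.tsum_le_tsum hbound
    exact ne_top_of_le_ne_top ENNReal.ofReal_ne_top hle
  rw [MeasureTheory.integral_tsum hmeas hne]
  have hterm : ∀ m : ℕ, (∫ x in Set.Ioo (0:ℝ) 1, f m x)
      = θ / (1 + ρ) * (γ ^ m / pochR (2 + ρ) m) := by
    intro m
    have h1 : (∫ x in Set.Ioo (0:ℝ) 1, f m x) = ∫ x in (0:ℝ)..1, f m x := by
      rw [intervalIntegral.integral_of_le zero_le_one,
        MeasureTheory.integral_Ioc_eq_integral_Ioo]
    have h2 : (∫ x in (0:ℝ)..1, f m x)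
        = θ * (γ ^ m / m.factorial) * ∫ x in (0:ℝ)..1, x ^ m * (1 - x) ^ ρ := by
      rw [← intervalIntegral.integral_const_mul]
    rw [h1, h2, beta_nat_rpow m ρ hρ]
    have hfac : (m.factorial : ℝ) ≠ 0 := Nat.cast_ne_zero.mpr m.factorial_ne_zero
    have hr : pochR (ρ + 1) (m + 1) = (1 + ρ) * pochR (2 + ρ) m := by
      rw [pochR_succ_left, show ρ + 1 + 1 = 2 + ρ by ring, show ρ + 1 = 1 + ρ by ring]
    rw [hr]
    have hp2 : (0:ℝ) < pochR (2 + ρ) m := pochR_pos (by linarith) m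
    have h1ρ : (0:ℝ) < 1 + ρ := by linarith
    field_simp
  have hsum : Summable fun m : ℕ => γ ^ m / pochR (2 + ρ) m := by
    apply Summable.of_nonneg_of_le
      (fun m => div_nonneg (pow_nonneg hγ m) (pochR_pos (by linarith) m).le)
      (fun m => ?_) (Real.summable_pow_div_factorial γ)
    have hfle : (m.factorial : ℝ) ≤ pochR (2 + ρ) m := factorial_le_pochR (by linarith) m
    have hfpos : (0:ℝ) < m.factorial := by positivity
    gcongr
  calc (∑' m : ℕ, ∫ x in Set.Ioo (0:ℝ) 1, f m x)
      = ∑' m : ℕ, θ / (1 + ρ) * (γ ^ m / pochR (2 + ρ) m) := tsum_congr hterm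
    _ = θ / (1 + ρ) * ∑' m : ℕ, γ ^ m / pochR (2 + ρ) m := tsum_mul_left
    _ = θ / (1 + ρ) * (1 + ∑' m : ℕ, γ ^ (m + 1) / pochR (2 + ρ) (m + 1)) := by
        congr 1
        rw [hsum.tsum_eq_zero_add]
        simp [pochR_zero]
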